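/- (Lemma B.1.) Let T : S → A → S be a shared transition function and R_i : S → A → ℝ, i ∈ I, reward functions forming a family of deterministic MDPs with shared transitions, let H ≥ 1, and let the policy π* : S → A be α-optimal everywhere. Fix a state s ∈ S, a horizon index h < H, a positive integer n, indices i_1, …, i_n ∈ I, and real numbers Q_{j,a} for 1 ≤ j ≤ n and a ∈ A satisfying R_{i_j}(s,a) + V*_{i_j}(h, T(s,a)) ≥ Q_{j,a} ≥ R_{i_j}(s,a) + V*_{i_j}(h, T(s,a)) − β for all j and a. Then for every action a ∈ A: (1/n)·Σ_{j=1}^n Q_{j,π*(s)} ≥ (1/n)·Σ_{j=1}^n Q_{j,a} − α − β. -/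
import Mathlib


open scoped BigOperators

/-- The `h`-step value of a stationary deterministic policy `π` in the deterministic MDP
with transition function `T` and reward function `R`. -/
noncomputable def detVal {S A : Type*} (T : S → A → S) (R : S → A → ℝ)
    (π : S → A) : ℕ → S → ℝ
  | 0, _ => 0
  | h + 1, s => R s (π s) + detVal T R π h (T s (π s))

/-- The `h`-step optimal value in the deterministic MDP `(T, R)`. -/
noncomputable def detOptVal {S A : Type*} [Fintype A] [Nonempty A]
    (T : S → A → S) (R : S → A → ℝ) : ℕ → S → ℝ
  | 0, _ => 0
  | h + 1, s => ⨆ a : A, (R s a + detOptVal T R h (T s a))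


lemma detVal_le_detOptVal {S A : Type*} [Fintype A] [Nonempty A]
    (T : S → A → S) (R : S → A → ℝ) (π : S → A) :
    ∀ h : ℕ, ∀ s : S, detVal T R π h s ≤ detOptVal T R h s := by
  intro h
  induction h with
  | zero => intro s; simp [detVal, detOptVal]
  | succ h ih =>
    intro s
    have : R s (π s) + detVal T R π h (T s (π s)) ≤
        R s (π s) + detOptVal T R h (T s (π s)) := by
      linarith [ih (T s (π s))]
    calc detVal T R π (h+1) s = R s (π s) + detVal T R π h (T s (π s)) := rfl
      _ ≤ R s (π s) + detOptVal T R h (T s (π s)) := this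
      _ ≤ ⨆ a : A, (R s a + detOptVal T R h (T s a)) :=
          le_ciSup (f := fun a : A => R s a + detOptVal T R h (T s a))
            (Set.Finite.bddAbove (Set.finite_range _)) (π s)
      _ = detOptVal T R (h+1) s := rfl

lemma add_detOptVal_le {S A : Type*} [Fintype A] [Nonempty A]
    (T : S → A → S) (R : S → A → ℝ) (h : ℕ) (s : S) (a : A) :
    R s a + detOptVal T R h (T s a) ≤ detOptVal T R (h+1) s :=
  le_ciSup (f := fun a : A => R s a + detOptVal T R h (T s a))
    (Set.Finite.bddAbove (Set.finite_range _)) a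

/-- **Lemma B.1.** For a family of deterministic MDPs with shared transitions, a policy `π*`
that is `α`-optimal everywhere, and `β`-accurate Q-estimates `Q j a` for the sampled MDPs
`i_1, …, i_n`, the empirical average of `Q` at `π*(s)` is within `α + β` of the empirical
average of `Q` at any other action. -/
theorem lemma_B1
    {S A I : Type*} [Fintype S] [Nonempty S] [Fintype A] [Nonempty A] [Fintype I]
    (T : S → A → S) (R : I → S → A → ℝ)
    (H : ℕ) (hH : 1 ≤ H)
    (α β : ℝ) (hα : 0 ≤ α) (hβ : 0 ≤ β)
    (πstar : S → A)
    (hopt : ∀ i : I, ∀ s : S, ∀ h : ℕ, h ≤ H →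
      detVal T (R i) πstar h s ≥ detOptVal T (R i) h s - α)
    (s : S) (h : ℕ) (hh : h < H)
    (n : ℕ) (hn : 0 < n)
    (idx : Fin n → I) (Q : Fin n → A → ℝ)
    (hQub : ∀ j : Fin n, ∀ a : A,
      Q j a ≤ R (idx j) s a + detOptVal T (R (idx j)) h (T s a))
    (hQlb : ∀ j : Fin n, ∀ a : A,
      R (idx j) s a + detOptVal T (R (idx j)) h (T s a) - β ≤ Q j a) :
    ∀ a : A,
      (1 / (n : ℝ)) * ∑ j : Fin n, Q j (πstar s) ≥
        (1 / (n : ℝ)) * ∑ j : Fin n, Q j a - α - β := by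
  intro a
  have key : ∀ j : Fin n, Q j (πstar s) ≥ Q j a - α - β := by
    intro j
    have h1 : Q j (πstar s) ≥
        R (idx j) s (πstar s) + detOptVal T (R (idx j)) h (T s (πstar s)) - β :=
      hQlb j (πstar s)
    have h2 : detVal T (R (idx j)) πstar h (T s (πstar s)) ≤
        detOptVal T (R (idx j)) h (T s (πstar s)) :=
      detVal_le_detOptVal T (R (idx j)) πstar h (T s (πstar s))
    have h3 : detVal T (R (idx j)) πstar (h+1) s =
        R (idx j) s (πstar s) + detVal T (R (idx j)) πstar h (T s (πstar s)) := rfl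
    have h4 : detVal T (R (idx j)) πstar (h+1) s ≥
        detOptVal T (R (idx j)) (h+1) s - α :=
      hopt (idx j) s (h+1) (by omega)
    have h5 := add_detOptVal_le T (R (idx j)) h s a
    have h6 := hQub j a
    linarith
  have hsum : ∑ j : Fin n, Q j (πstar s) ≥ ∑ j : Fin n, (Q j a - α - β) :=
    Finset.sum_le_sum fun j _ => key j
  have hn' : ((n:ℝ)) ≠ 0 := by positivity
  have hthis : ∑ j : Fin n, (Q j a - α - β) = ∑ j : Fin n, Q j a - n * (α + β) := by
    simp [sub_sub, Finset.sum_sub_distrib, Finset.sum_const, Finset.card_univ]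
    ring
  rw [hthis] at hsum
  have hmul := mul_le_mul_of_nonneg_left hsum (by positivity : (0:ℝ) ≤ 1 / n)
  have heq : (1/(n:ℝ)) * (∑ j : Fin n, Q j a - n * (α + β)) =
      (1/(n:ℝ)) * ∑ j : Fin n, Q j a - (α + β) := by
    field_simp
  linarith
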